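/- For any i ≥ 1 and any partition λ, the product h_i · s_λ of the complete homogeneous symmetric function h_i with the Schur function s_λ equals the sum of s_μ over all partitions μ containing λ such that μ/λ is a horizontal strip of size i (i.e., |μ| = |λ| + i and λ_k ≤ μ_k ≤ λ_{k-1} for all k, where λ_0 = ∞). -/

import Mathlib

open MvPolynomial Finset

noncomputable section

/-- The ring of symmetric functions, as the free polynomial ring generated by the
complete homogeneous symmetric functions `h₁, h₂, …` (variable `n` is `h_{n+1}`). -/
abbrev SymF := MvPolynomial ℕ ℤ

/-- The complete homogeneous symmetric function `h_n`, with `h_n = 0` for `n < 0`. -/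
def hh : ℤ → SymF
  | Int.ofNat 0 => 1
  | Int.ofNat (n+1) => X n
  | Int.negSucc _ => 0

/-- The Schur function `s_λ` for `λ = (lam 0, lam 1, …, lam (l-1))`, defined by the
Jacobi–Trudi determinant `det (h_{λ_i - i + j})₁≤i,j≤l`. -/
def schur (l : ℕ) (lam : Fin l → ℕ) : SymF :=
  Matrix.det (Matrix.of fun i j : Fin l => hh ((lam i : ℤ) + (j : ℤ) - (i : ℤ)))

/-- The elementary symmetric function `e_n = s_{(1^n)}`. -/
def ee (n : ℕ) : SymF := schur n (fun _ => 1)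

/-- The skew Schur function `s_{λ/μ}`, via the Jacobi–Trudi determinant
`det (h_{λ_i - μ_j - i + j})`. -/
def skewSchur (l : ℕ) (lam mu : Fin l → ℕ) : SymF :=
  Matrix.det (Matrix.of fun i j : Fin l =>
    hh ((lam i : ℤ) - (mu j : ℤ) + (j : ℤ) - (i : ℤ)))

namespace PieriAux
abbrev P := Polynomial SymF
def ent (n m : ℕ) (b a : Fin n) : SymF := hh ((m : ℤ) + (b : ℤ) - (a : ℤ))
def lamE (l : ℕ) (lam : Fin l → ℕ) : Fin (l+1) → ℕ := Fin.snoc lam 0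
def hiF (i l : ℕ) (lam : Fin l → ℕ) : Fin (l+1) → ℕ :=
  Fin.cases (lamE l lam 0 + i) (fun k => lamE l lam k.castSucc)

variable (i l : ℕ) (lam : Fin l → ℕ)

def G : Matrix (Fin (l+1)) (Fin (l+1)) P := fun a b =>
  ∑ m ∈ Finset.Icc (lamE l lam a) (hiF i l lam a),
    Polynomial.X ^ (m - lamE l lam a) * Polynomial.C (ent (l+1) m b a)

def Rm : Matrix (Fin (l+1)) (Fin (l+1)) P := fun a b =>
  ∑ j ∈ Finset.range (i+1),
    Polynomial.X ^ j * Polynomial.C (ent (l+1) (lamE l lam a + j) b a)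

lemma det_G : (G i l lam).det
    = ∑ p ∈ Fintype.piFinset (fun a => Finset.Icc (lamE l lam a) (hiF i l lam a)),
      Polynomial.X ^ (∑ a, (p a - lamE l lam a)) * Polynomial.C (schur (l+1) (fun a => p a)) := by
  have h1 : (G i l lam).det = Matrix.detRowAlternating.toMultilinearMap
      (fun a => ∑ m ∈ Finset.Icc (lamE l lam a) (hiF i l lam a),
        (Polynomial.X ^ (m - lamE l lam a) : P) • (fun b => Polynomial.C (ent (l+1) m b a) : Fin (l+1) → P)) := by
    show Matrix.detRowAlternating.toMultilinearMap _ = _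
    congr 1
    funext a
    rw [Finset.sum_fn]
    rfl
  rw [h1, (Matrix.detRowAlternating : (Fin (l+1) → P) [⋀^Fin (l+1)]→ₗ[P] P).toMultilinearMap.map_sum_finset
    (fun a m => (Polynomial.X ^ (m - lamE l lam a) : P) • (fun b => Polynomial.C (ent (l+1) m b a) : Fin (l+1) → P))
    (fun a => Finset.Icc (lamE l lam a) (hiF i l lam a))]
  refine Finset.sum_congr rfl fun r hr => ?_
  rw [MultilinearMap.map_smul_univ]
  rw [Finset.prod_pow_eq_pow_sum]
  have : (Matrix.detRowAlternating.toMultilinearMap (fun a => (fun b => Polynomial.C (ent (l+1) (r a) b a))) : P)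
      = Polynomial.C (schur (l+1) (fun a => r a)) := by
    show Matrix.det _ = _
    rw [schur, RingHom.map_det]
    rfl
  rw [this, smul_eq_mul]


def Iq : Ideal P := Ideal.span {Polynomial.X ^ (i+1)}
abbrev Q (i : ℕ) := P ⧸ Iq i
def mkQ : P →+* Q i := Ideal.Quotient.mk _

lemma mkX_pow_eq_zero (e : ℕ) (he : i < e) : mkQ i (Polynomial.X ^ e) = 0 := by
  rw [mkQ, Ideal.Quotient.eq_zero_iff_mem, Iq, Ideal.mem_span_singleton]
  exact pow_dvd_pow _ (by omega)


lemma sum_shift {M : Type*} [AddCommMonoid M] (c n : ℕ) (f : ℕ → M) :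
    ∑ j ∈ Finset.range (n+1), f (c + j) = ∑ m ∈ Finset.Icc c (c+n), f m := by
  refine Finset.sum_nbij' (fun j => c + j) (fun m => m - c) ?_ ?_ ?_ ?_ ?_ <;>
    intros <;> simp_all [Finset.mem_range, Finset.mem_Icc] <;> omega

lemma ent_shift (k : Fin l) (b : Fin (l+1)) (m : ℕ) :
    ent (l+1) m b k.castSucc = ent (l+1) (m+1) b k.succ := by
  unfold ent
  congr 1
  simp [Fin.coe_castSucc, Fin.val_succ]
  push_cast
  ring

lemma lamE_antitone (hlam : Antitone lam) : Antitone (lamE l lam) := by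
  intro a b hab
  unfold lamE
  induction a using Fin.lastCases with
  | last =>
    have : b = Fin.last l := le_antisymm (Fin.le_last _) hab
    subst this; simp
  | cast a =>
    induction b using Fin.lastCases with
    | last => simp
    | cast b =>
      simp only [Fin.snoc_castSucc]
      exact hlam (by simpa [Fin.castSucc_le_castSucc_iff] using hab)

lemma row_zero (b : Fin (l+1)) : mkQ i (G i l lam 0 b) = mkQ i (Rm i l lam 0 b) := by
  unfold G Rm
  rw [map_sum, map_sum]
  have h0 : hiF i l lam 0 = lamE l lam 0 + i := by simp [hiF]
  rw [h0, ← sum_shift]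
  refine Finset.sum_congr rfl fun j _ => ?_
  have : lamE l lam 0 + j - lamE l lam 0 = j := by omega
  rw [this]

lemma row_succ (hlam : Antitone lam) (k : Fin l) (b : Fin (l+1)) :
    mkQ i (G i l lam k.succ b)
      = mkQ i (Rm i l lam k.succ b)
        - mkQ i (Polynomial.X ^ (lamE l lam k.castSucc - lamE l lam k.succ + 1)
            * Rm i l lam k.castSucc b) := by
  set c := lamE l lam k.succ with hc
  set c' := lamE l lam k.castSucc with hc'
  have hcc : c ≤ c' := lamE_antitone l lam hlam (Fin.castSucc_le_succ k)
  set F : ℕ → Q i := fun m =>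
    mkQ i (Polynomial.X ^ (m - c)) * mkQ i (Polynomial.C (ent (l+1) m b k.succ)) with hF
  have hA : mkQ i (G i l lam k.succ b) = ∑ m ∈ Finset.Icc c (min c' (c+i)), F m := by
    unfold G
    rw [map_sum]
    have hs : hiF i l lam k.succ = c' := by simp [hiF, hc']
    rw [hs, ← hc]
    have step : ∀ m ∈ Finset.Icc c c',
        mkQ i (Polynomial.X ^ (m - c) * Polynomial.C (ent (l+1) m b k.succ)) = F m := by
      intro m _
      simp only [hF, map_mul]
    rw [Finset.sum_congr rfl step]
    refine (Finset.sum_subset (Finset.Icc_subset_Icc le_rfl (min_le_left _ _))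
      (fun m hm hnm => ?_)).symm
    have hlt : i < m - c := by simp only [Finset.mem_Icc] at hm hnm; omega
    show mkQ i (Polynomial.X ^ (m - c)) * mkQ i (Polynomial.C (ent (l+1) m b k.succ)) = 0
    exact mul_eq_zero_of_left (mkX_pow_eq_zero i _ hlt)
      (mkQ i (Polynomial.C (ent (l+1) m b k.succ)))
  have hB : mkQ i (Rm i l lam k.succ b) = ∑ m ∈ Finset.Icc c (c+i), F m := by
    unfold Rm
    rw [map_sum, ← sum_shift]
    refine Finset.sum_congr rfl fun j _ => ?_
    simp only [hF, map_mul, ← hc]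
    have h2 : c + j - c = j := by omega
    rw [h2]
  have hC : mkQ i (Polynomial.X ^ (c' - c + 1) * Rm i l lam k.castSucc b)
      = ∑ m ∈ Finset.Icc (c'+1) (c+i), F m := by
    unfold Rm
    rw [Finset.mul_sum, map_sum]
    have step : ∀ j ∈ Finset.range (i+1), mkQ i (Polynomial.X ^ (c' - c + 1)
          * (Polynomial.X ^ j * Polynomial.C (ent (l+1) (lamE l lam k.castSucc + j) b k.castSucc)))
        = F (c' + 1 + j) := by
      intro j _
      simp only [hF, ← hc']
      rw [← mul_assoc, ← pow_add, map_mul, ent_shift]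
      have e1 : c' - c + 1 + j = c' + 1 + j - c := by omega
      have e2 : c' + j + 1 = c' + 1 + j := by omega
      rw [e1, e2]
    rw [Finset.sum_congr rfl step, sum_shift]
    refine (Finset.sum_subset (Finset.Icc_subset_Icc le_rfl (by omega))
      (fun m hm hnm => ?_)).symm
    have hlt : i < m - c := by simp only [Finset.mem_Icc] at hm hnm; omega
    show mkQ i (Polynomial.X ^ (m - c)) * mkQ i (Polynomial.C (ent (l+1) m b k.succ)) = 0
    exact mul_eq_zero_of_left (mkX_pow_eq_zero i _ hlt)
      (mkQ i (Polynomial.C (ent (l+1) m b k.succ)))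
  rw [hA, hB, hC, ← Finset.sum_sdiff_eq_sub (Finset.Icc_subset_Icc (by omega) le_rfl)]
  refine (Finset.sum_congr ?_ fun _ _ => rfl)
  ext m
  simp only [Finset.mem_Icc, Finset.mem_sdiff]
  omega
lemma zmul (x : Q i) : (0 : Q i) * x = 0 := zero_mul x
lemma addz (x : Q i) : x + (0 : Q i) = x := add_zero x

lemma hh_neg (z : ℤ) (hz : z < 0) : hh z = 0 := by
  cases z with
  | ofNat n => exact absurd hz (by exact not_lt.mpr (Int.ofNat_nonneg n))
  | negSucc n => rfl

def Gq : Matrix (Fin (l+1)) (Fin (l+1)) (Q i) := fun a b => mkQ i (G i l lam a b)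
def Rq : Matrix (Fin (l+1)) (Fin (l+1)) (Q i) := fun a b => mkQ i (Rm i l lam a b)

lemma det_Gq (hlam : Antitone lam) : (Gq i l lam).det = (Rq i l lam).det := by
  refine (Matrix.det_eq_of_forall_row_eq_smul_add_pred (A := Rq i l lam) (B := Gq i l lam)
    (fun k => mkQ i (Polynomial.X ^ (lamE l lam k.castSucc - lamE l lam k.succ + 1)))
    (fun j => (row_zero i l lam j).symm) (fun k j => ?_)).symm
  show mkQ i (Rm i l lam k.succ j) = mkQ i (G i l lam k.succ j) + _ * mkQ i (Rm i l lam k.castSucc j)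
  rw [row_succ i l lam hlam k j, map_mul]
  ring

lemma ent_colshift (m : ℕ) (b : Fin l) (a : Fin (l+1)) :
    ent (l+1) m b.succ a = ent (l+1) (m+1) b.castSucc a := by
  unfold ent
  congr 1
  simp [Fin.coe_castSucc, Fin.val_succ]
  push_cast
  ring

def Sq : Matrix (Fin (l+1)) (Fin (l+1)) (Q i) := fun a b =>
  if (b : ℕ) < l then mkQ i (Polynomial.C (ent (l+1) (lamE l lam a) b a)) else Rq i l lam a b

lemma colrel (a : Fin (l+1)) (b : Fin l) :
    Rq i l lam a b.castSucc
      = mkQ i (Polynomial.C (ent (l+1) (lamE l lam a) b.castSucc a))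
        + mkQ i Polynomial.X * Rq i l lam a b.succ := by
  have h1 : Rm i l lam a b.castSucc + Polynomial.X ^ (i+1)
        * Polynomial.C (ent (l+1) (lamE l lam a + (i+1)) b.castSucc a)
      = Polynomial.C (ent (l+1) (lamE l lam a) b.castSucc a)
        + Polynomial.X * Rm i l lam a b.succ := by
    unfold Rm
    rw [Finset.mul_sum]
    have key : ∀ j, Polynomial.X * (Polynomial.X ^ j
          * Polynomial.C (ent (l+1) (lamE l lam a + j) b.succ a))
        = Polynomial.X ^ (j+1) * Polynomial.C (ent (l+1) (lamE l lam a + (j+1)) b.castSucc a) := by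
      intro j
      rw [← mul_assoc, ← pow_succ', ent_colshift]
      have : lamE l lam a + j + 1 = lamE l lam a + (j + 1) := by omega
      rw [this]
    rw [Finset.sum_congr rfl (fun j _ => key j)]
    rw [Finset.sum_range_succ'
      (fun j => Polynomial.X ^ j * Polynomial.C (ent (l+1) (lamE l lam a + j) b.castSucc a)) i]
    rw [Finset.sum_range_succ
      (fun j => Polynomial.X ^ (j+1) * Polynomial.C (ent (l+1) (lamE l lam a + (j+1)) b.castSucc a)) i]
    simp only [pow_zero, one_mul, add_zero]
    ring
  have h2 := congrArg (mkQ i) h1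
  rw [map_add, map_add, map_mul, map_mul] at h2
  rw [mkX_pow_eq_zero i (i+1) (by omega)] at h2
  rw [zmul, addz] at h2
  exact h2

lemma rev_succ_eq (j : Fin l) : (j.succ : Fin (l+1)).rev = (j.rev).castSucc := by
  ext
  simp only [Fin.val_rev, Fin.val_succ, Fin.coe_castSucc]
  omega

lemma rev_castSucc_eq (j : Fin l) : (j.castSucc : Fin (l+1)).rev = (j.rev).succ := by
  ext
  simp only [Fin.val_rev, Fin.val_succ, Fin.coe_castSucc]
  omega

lemma det_Rq : (Rq i l lam).det = (Sq i l lam).det := by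
  have key : ((Rq i l lam).submatrix ⇑(Fin.revPerm : Equiv.Perm (Fin (l+1)))
        ⇑(Fin.revPerm : Equiv.Perm (Fin (l+1)))).det
      = ((Sq i l lam).submatrix ⇑(Fin.revPerm : Equiv.Perm (Fin (l+1)))
        ⇑(Fin.revPerm : Equiv.Perm (Fin (l+1)))).det := by
    refine Matrix.det_eq_of_forall_col_eq_smul_add_pred (fun _ => mkQ i Polynomial.X)
      (fun r => ?_) (fun r j => ?_)
    · show Rq i l lam (Fin.rev r) (Fin.rev 0) = Sq i l lam (Fin.rev r) (Fin.rev 0)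
      have h0 : (Fin.rev (0 : Fin (l+1))) = Fin.last l := by
        ext; simp [Fin.val_rev, Fin.val_last]
      rw [h0]
      show _ = if ((Fin.last l : Fin (l+1)) : ℕ) < l then _ else Rq i l lam (Fin.rev r) (Fin.last l)
      rw [if_neg (by simp [Fin.val_last])]
    · show Rq i l lam (Fin.rev r) (Fin.rev j.succ)
        = Sq i l lam (Fin.rev r) (Fin.rev j.succ)
          + mkQ i Polynomial.X * Rq i l lam (Fin.rev r) (Fin.rev j.castSucc)
      rw [rev_succ_eq, rev_castSucc_eq]
      have hlt : ((j.rev.castSucc : Fin (l+1)) : ℕ) < l := by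
        simp only [Fin.coe_castSucc]
        exact j.rev.isLt
      rw [colrel i l lam (Fin.rev r) j.rev]
      show _ = (if ((j.rev.castSucc : Fin (l+1)) : ℕ) < l then
          mkQ i (Polynomial.C (ent (l+1) (lamE l lam (Fin.rev r)) j.rev.castSucc (Fin.rev r))) else _) + _
      rw [if_pos hlt]
  rwa [Matrix.det_submatrix_equiv_self (Fin.revPerm : Equiv.Perm (Fin (l+1))),
    Matrix.det_submatrix_equiv_self (Fin.revPerm : Equiv.Perm (Fin (l+1)))] at key

def Htr : P := ∑ j ∈ Finset.range (i+1), Polynomial.X ^ j * Polynomial.C (hh (j : ℤ))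

lemma det_Sq : (Sq i l lam).det = mkQ i (Htr i) * mkQ i (Polynomial.C (schur l lam)) := by
  rw [Matrix.det_succ_row (Sq i l lam) (Fin.last l)]
  rw [Finset.sum_eq_single_of_mem (Fin.last l) (Finset.mem_univ _) ?vanish]
  case vanish =>
    intro b _ hb
    have hb' : (b : ℕ) < l := by
      have h1 := b.isLt
      have h2 : (b : ℕ) ≠ l := fun h => hb (Fin.ext (by simp [Fin.val_last, h]))
      omega
    have hzero : Sq i l lam (Fin.last l) b = 0 := by
      show (if (b : ℕ) < l then _ else _) = (0 : Q i)
      rw [if_pos hb']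
      have : ent (l+1) (lamE l lam (Fin.last l)) b (Fin.last l) = 0 := by
        rw [lamE, Fin.snoc_last]
        refine hh_neg _ ?_
        simp only [Fin.val_last]
        push_cast
        omega
      rw [this, map_zero, map_zero]
    rw [hzero]
    exact mul_eq_zero_of_left
      (mul_eq_zero_of_right ((-1 : Q i) ^ (((Fin.last l) : ℕ) + (b : ℕ)))
        (by rfl))
      (((Sq i l lam).submatrix (Fin.last l).succAbove b.succAbove).det)
  · have h1 : Sq i l lam (Fin.last l) (Fin.last l) = mkQ i (Htr i) := by
      show (if ((Fin.last l : Fin (l+1)) : ℕ) < l then _ else Rq i l lam (Fin.last l) (Fin.last l))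
        = mkQ i (Htr i)
      rw [if_neg (by simp [Fin.val_last])]
      show mkQ i (Rm i l lam (Fin.last l) (Fin.last l)) = mkQ i (Htr i)
      congr 1
      unfold Rm Htr
      refine Finset.sum_congr rfl fun j _ => ?_
      congr 2
      unfold ent
      rw [lamE, Fin.snoc_last]
      congr 1
      simp only [Fin.val_last]
      push_cast
      ring
    have h2 : ((Sq i l lam).submatrix (Fin.last l).succAbove (Fin.last l).succAbove).det
        = mkQ i (Polynomial.C (schur l lam)) := by
      rw [Fin.succAbove_last]
      have hmat : (Sq i l lam).submatrix Fin.castSucc Fin.castSucc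
          = ((mkQ i).comp Polynomial.C).mapMatrix
              (Matrix.of fun a b : Fin l => hh ((lam a : ℤ) + (b : ℤ) - (a : ℤ))) := by
        ext a b
        show Sq i l lam a.castSucc b.castSucc = mkQ i (Polynomial.C (hh ((lam a : ℤ) + b - a)))
        have hblt : ((b.castSucc : Fin (l+1)) : ℕ) < l := by
          simp only [Fin.coe_castSucc]; exact b.isLt
        show (if ((b.castSucc : Fin (l+1)) : ℕ) < l then _ else _) = _
        rw [if_pos hblt]
        congr 2
        unfold ent
        rw [lamE, Fin.snoc_castSucc]
        simp [Fin.coe_castSucc]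
      rw [hmat, ← RingHom.map_det]
      rfl
    rw [h1, h2]
    have hsq : (-1 : Q i) ^ 2 = 1 := by ring
    have hsign : ((-1 : Q i)) ^ (((Fin.last l) : ℕ) + ((Fin.last l) : ℕ)) = 1 := by
      rw [Fin.val_last, ← two_mul, pow_mul, hsq]
      exact one_pow (M := Q i) l
    rw [hsign]
    ring

lemma main_mod (hlam : Antitone lam) :
    mkQ i ((G i l lam).det) = mkQ i (Htr i * Polynomial.C (schur l lam)) := by
  have h0 : mkQ i ((G i l lam).det) = (Gq i l lam).det := by
    rw [RingHom.map_det (R := P) (S := Q i) (mkQ i)]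
    rfl
  rw [h0, det_Gq i l lam hlam, det_Rq, det_Sq, map_mul]

lemma coeff_eq (hlam : Antitone lam) :
    ((G i l lam).det).coeff i = (Htr i * Polynomial.C (schur l lam)).coeff i := by
  have h := main_mod i l lam hlam
  have hmem : (G i l lam).det - Htr i * Polynomial.C (schur l lam) ∈ Iq i :=
    Ideal.Quotient.eq.mp h
  obtain ⟨g, hg⟩ := Ideal.mem_span_singleton.mp hmem
  have hg' : (G i l lam).det - Htr i * Polynomial.C (schur l lam) = g * Polynomial.X ^ (i+1) := by
    rw [hg]; ring
  have hc := congrArg (fun p => Polynomial.coeff p i) hg'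
  simp only [Polynomial.coeff_sub] at hc
  rw [Polynomial.coeff_mul_X_pow'] at hc
  rw [if_neg (by omega)] at hc
  exact sub_eq_zero.mp hc

lemma coeff_Htr (s : SymF) : (Htr i * Polynomial.C s).coeff i = hh (i : ℤ) * s := by
  rw [Htr, Finset.sum_mul]
  have key : ∀ j : ℕ, Polynomial.X ^ j * Polynomial.C (hh (j : ℤ)) * Polynomial.C s
      = Polynomial.monomial j (hh (j : ℤ) * s) := by
    intro j
    rw [← Polynomial.C_mul_X_pow_eq_monomial, map_mul]
    ring
  rw [Finset.sum_congr rfl (fun j _ => key j), Polynomial.finset_sum_coeff]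
  simp only [Polynomial.coeff_monomial]
  rw [Finset.sum_ite_eq' (Finset.range (i+1)) i (fun j : ℕ => hh (j : ℤ) * s)]
  rw [if_pos (Finset.self_mem_range_succ i)]

lemma coeff_detG :
    ((G i l lam).det).coeff i
      = ∑ p ∈ (Fintype.piFinset fun a => Finset.Icc (lamE l lam a) (hiF i l lam a)).filter
          (fun p => (∑ a, (p a - lamE l lam a)) = i),
        schur (l+1) (fun a => p a) := by
  rw [det_G, Polynomial.finset_sum_coeff]
  have key : ∀ p : Fin (l+1) → ℕ,
      Polynomial.X ^ (∑ a, (p a - lamE l lam a)) * Polynomial.C (schur (l+1) (fun a => p a))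
        = Polynomial.monomial (∑ a, (p a - lamE l lam a)) (schur (l+1) (fun a => p a)) := by
    intro p
    rw [← Polynomial.C_mul_X_pow_eq_monomial]
    ring
  rw [Finset.sum_congr rfl (fun p _ => by rw [key p])]
  simp only [Polynomial.coeff_monomial]
  rw [Finset.sum_filter]

lemma hiF_succ (k : Fin l) : hiF i l lam k.succ = lamE l lam k.castSucc := by
  simp [hiF]

lemma sum_lamE : ∑ a, lamE l lam a = ∑ k, lam k := by
  rw [lamE, Fin.sum_snoc]
  simp

lemma final (hlam : Antitone lam) :
    hh (i : ℤ) * schur l lam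
    = ∑ μ ∈ Finset.univ.filter
        (fun μ : Fin (l+1) → Fin ((∑ k, lam k) + i + 1) =>
          (∑ k, (μ k : ℕ)) = (∑ k, lam k) + i ∧
          (∀ k : Fin l, lam k ≤ (μ k.castSucc : ℕ)) ∧
          (∀ k : Fin l, (μ k.succ : ℕ) ≤ lam k)),
        schur (l+1) (fun k => (μ k : ℕ)) := by
  have h1 := coeff_eq i l lam hlam
  rw [coeff_Htr i (schur l lam), coeff_detG i l lam] at h1
  rw [← h1]
  set N := (∑ k, lam k) + i with hN
  refine Finset.sum_nbij'
    (i := fun p (a : Fin (l+1)) =>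
      (⟨min (p a) N, Nat.lt_succ_of_le (min_le_right _ _)⟩ : Fin (N + 1)))
    (j := fun μ (a : Fin (l+1)) => (μ a : ℕ)) ?_ ?_ ?_ ?_ ?_
  · -- forward membership
    intro p hp
    rw [Finset.mem_filter] at hp
    obtain ⟨hp1, hp2⟩ := hp
    rw [Fintype.mem_piFinset] at hp1
    have lower : ∀ a, lamE l lam a ≤ p a := fun a => (Finset.mem_Icc.mp (hp1 a)).1
    have hsum : ∑ a, p a = N := by
      have e1 : ∑ a, (p a - lamE l lam a + lamE l lam a) = ∑ a, p a :=
        Finset.sum_congr rfl (fun a _ => by have := lower a; omega)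
      rw [Finset.sum_add_distrib, hp2, sum_lamE] at e1
      omega
    have bound : ∀ a, p a ≤ N := by
      intro a
      rw [← hsum]
      exact Finset.single_le_sum (fun a _ => Nat.zero_le _) (Finset.mem_univ a)
    rw [Finset.mem_filter]
    refine ⟨Finset.mem_univ _, ?_, ?_, ?_⟩
    · simp only []
      rw [← hsum]
      exact Finset.sum_congr rfl (fun a _ => by have := bound a; simp; omega)
    · intro k
      have h := lower k.castSucc
      rw [lamE, Fin.snoc_castSucc] at h
      have := bound k.castSucc
      simp
      omega
    · intro k
      have h := (Finset.mem_Icc.mp (hp1 k.succ)).2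
      rw [hiF_succ, lamE, Fin.snoc_castSucc] at h
      simp
      omega
  · -- backward membership
    intro μ hμ
    rw [Finset.mem_filter] at hμ
    obtain ⟨_, hsum, h2, h3⟩ := hμ
    have lower : ∀ a, lamE l lam a ≤ (μ a : ℕ) := by
      intro a
      induction a using Fin.lastCases with
      | last => rw [lamE, Fin.snoc_last]; exact Nat.zero_le _
      | cast k => rw [lamE, Fin.snoc_castSucc]; exact h2 k
    have upper : ∀ a, (μ a : ℕ) ≤ hiF i l lam a := by
      intro a
      induction a using Fin.cases with
      | zero =>
        have hs : ∑ k : Fin (l+1), (μ k : ℕ) = (μ 0 : ℕ) + ∑ k : Fin l, (μ k.succ : ℕ) :=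
          Fin.sum_univ_succ _
        have hl : ∑ k : Fin l, lamE l lam k.succ ≤ ∑ k : Fin l, (μ k.succ : ℕ) :=
          Finset.sum_le_sum (fun k _ => lower k.succ)
        have hsplit : ∑ a, lamE l lam a = lamE l lam 0 + ∑ k : Fin l, lamE l lam k.succ :=
          Fin.sum_univ_succ _
        have hse := sum_lamE l lam
        have h0 : hiF i l lam 0 = lamE l lam 0 + i := by simp [hiF]
        rw [h0]
        omega
      | succ k =>
        rw [hiF_succ, lamE, Fin.snoc_castSucc]
        exact h3 k
    rw [Finset.mem_filter]
    refine ⟨?_, ?_⟩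
    · rw [Fintype.mem_piFinset]
      exact fun a => Finset.mem_Icc.mpr ⟨lower a, upper a⟩
    · have e1 : ∑ a, ((μ a : ℕ) - lamE l lam a + lamE l lam a) = ∑ a, (μ a : ℕ) :=
        Finset.sum_congr rfl (fun a _ => by have := lower a; omega)
      rw [Finset.sum_add_distrib] at e1
      rw [hsum] at e1
      rw [sum_lamE] at e1
      show ∑ a, ((μ a : ℕ) - lamE l lam a) = i
      omega
  · -- left inverse
    intro p hp
    rw [Finset.mem_filter] at hp
    obtain ⟨hp1, hp2⟩ := hp
    rw [Fintype.mem_piFinset] at hp1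
    have lower : ∀ a, lamE l lam a ≤ p a := fun a => (Finset.mem_Icc.mp (hp1 a)).1
    have hsum : ∑ a, p a = N := by
      have e1 : ∑ a, (p a - lamE l lam a + lamE l lam a) = ∑ a, p a :=
        Finset.sum_congr rfl (fun a _ => by have := lower a; omega)
      rw [Finset.sum_add_distrib, hp2, sum_lamE] at e1
      omega
    have bound : ∀ a, p a ≤ N := by
      intro a
      rw [← hsum]
      exact Finset.single_le_sum (fun a _ => Nat.zero_le _) (Finset.mem_univ a)
    funext a
    simp only []
    have := bound a
    omega
  · -- right inverse
    intro μ _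
    funext a
    exact Fin.ext (by simp [Fin.is_le])
  · -- values
    intro p hp
    rw [Finset.mem_filter] at hp
    obtain ⟨hp1, hp2⟩ := hp
    rw [Fintype.mem_piFinset] at hp1
    have lower : ∀ a, lamE l lam a ≤ p a := fun a => (Finset.mem_Icc.mp (hp1 a)).1
    have hsum : ∑ a, p a = N := by
      have e1 : ∑ a, (p a - lamE l lam a + lamE l lam a) = ∑ a, p a :=
        Finset.sum_congr rfl (fun a _ => by have := lower a; omega)
      rw [Finset.sum_add_distrib, hp2, sum_lamE] at e1
      omega
    have bound : ∀ a, p a ≤ N := by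
      intro a
      rw [← hsum]
      exact Finset.single_le_sum (fun a _ => Nat.zero_le _) (Finset.mem_univ a)
    congr 1
    funext a
    simp only []
    have := bound a
    omega

end PieriAux

/-- The Pieri rule: for `i ≥ 1` and a partition `λ` (with at most `l` parts),
`h_i · s_λ = ∑_μ s_μ`, the sum over all partitions `μ ⊇ λ` such that `μ/λ` is a
horizontal strip of size `i`, i.e. `|μ| = |λ| + i` and `λ_k ≤ μ_k ≤ λ_{k-1}` for
all `k` (with `λ_0 = ∞`). Such a `μ` has at most `l+1` parts, and its parts are
bounded by `|λ| + i`, so `μ` ranges over functions `Fin (l+1) → Fin (|λ|+i+1)`. -/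
theorem stmt4 (i l : ℕ) (hi : 1 ≤ i) (lam : Fin l → ℕ) (hlam : Antitone lam) :
    hh (i : ℤ) * schur l lam
    = ∑ μ ∈ Finset.univ.filter
        (fun μ : Fin (l+1) → Fin ((∑ k, lam k) + i + 1) =>
          (∑ k, (μ k : ℕ)) = (∑ k, lam k) + i ∧
          (∀ k : Fin l, lam k ≤ (μ k.castSucc : ℕ)) ∧
          (∀ k : Fin l, (μ k.succ : ℕ) ≤ lam k)),
        schur (l+1) (fun k => (μ k : ℕ)) := by
  exact PieriAux.final i l lam hlam

end
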